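/- For n×n real positive definite symmetric matrices W and Q, the two expressions W^{1/2} (W^{1/2} Q W^{1/2})^{-1/2} W^{1/2} and Q^{-1/2} (Q^{1/2} W Q^{1/2})^{1/2} Q^{-1/2} are equal. -/

import Mathlib

set_option maxHeartbeats 1000000


open Matrix

namespace Matrix.PosSemidef

open scoped ComplexOrder

/-- The positive semidefinite square root of a positive semidefinite matrix
(the definition removed from Mathlib, restored verbatim). -/
noncomputable def sqrt {n 𝕜 : Type*} [Fintype n] [RCLike 𝕜] [DecidableEq n]
    {A : Matrix n n 𝕜} (hA : A.PosSemidef) : Matrix n n 𝕜 :=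
  hA.1.eigenvectorUnitary.1 * diagonal ((↑) ∘ (√·) ∘ hA.1.eigenvalues) *
    (star hA.1.eigenvectorUnitary : Matrix n n 𝕜)

end Matrix.PosSemidef

namespace Matrix.PosSemidef

open scoped ComplexOrder

theorem sqrt_mul_self {n 𝕜 : Type*} [Fintype n] [RCLike 𝕜] [DecidableEq n]
    {A : Matrix n n 𝕜} (hA : A.PosSemidef) : hA.sqrt * hA.sqrt = A := by
  conv_rhs => rw [hA.1.spectral_theorem, Unitary.conjStarAlgAut_apply]
  unfold sqrt
  have hU : (star hA.1.eigenvectorUnitary : Matrix n n 𝕜) * hA.1.eigenvectorUnitary.1 = 1 :=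
    Unitary.coe_star_mul_self _
  rw [show ∀ a b c d e f : Matrix n n 𝕜, a * b * c * (d * e * f) = a * (b * (c * d) * e) * f by
    intros; simp only [mul_assoc], hU, mul_one, diagonal_mul_diagonal]
  congr 3
  funext i
  simp only [Function.comp_apply]
  rw [← RCLike.ofReal_mul, Real.mul_self_sqrt (hA.eigenvalues_nonneg i)]

theorem posSemidef_sqrt {n 𝕜 : Type*} [Fintype n] [RCLike 𝕜] [DecidableEq n]
    {A : Matrix n n 𝕜} (hA : A.PosSemidef) : hA.sqrt.PosSemidef := by
  unfold sqrt
  have hD : (diagonal ((↑) ∘ (√·) ∘ hA.1.eigenvalues) : Matrix n n 𝕜).PosSemidef := by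
    rw [posSemidef_diagonal_iff]
    intro i
    simp only [Function.comp_apply, RCLike.ofReal_nonneg]
    exact Real.sqrt_nonneg _
  exact hD.mul_mul_conjTranspose_same _

theorem eq_of_sq_eq_sq {n 𝕜 : Type*} [Fintype n] [RCLike 𝕜] [DecidableEq n]
    {A B : Matrix n n 𝕜} (hA : A.PosSemidef) (hB : B.PosSemidef) (h : A ^ 2 = B ^ 2) :
    A = B := by
  open scoped MatrixOrder in
  exact (CFC.sq_eq_sq_iff A B (Matrix.nonneg_iff_posSemidef.mpr hA)
    (Matrix.nonneg_iff_posSemidef.mpr hB)).mp h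

end Matrix.PosSemidef

/-- For n×n real positive definite symmetric matrices `W` and `Q`,
`W^{1/2} (W^{1/2} Q W^{1/2})^{-1/2} W^{1/2} = Q^{-1/2} (Q^{1/2} W Q^{1/2})^{1/2} Q^{-1/2}`. -/
theorem stmt2 {n : ℕ} (W Q : Matrix (Fin n) (Fin n) ℝ)
    (hW : W.PosDef) (hQ : Q.PosDef)
    (h1 : (hW.posSemidef.sqrt * Q * hW.posSemidef.sqrt).PosSemidef)
    (h2 : (hQ.posSemidef.sqrt * W * hQ.posSemidef.sqrt).PosSemidef) :
    hW.posSemidef.sqrt * h1.sqrt⁻¹ * hW.posSemidef.sqrt =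
      hQ.posSemidef.sqrt⁻¹ * h2.sqrt * hQ.posSemidef.sqrt⁻¹ := by
  set A := hW.posSemidef.sqrt with hAdef
  set B := hQ.posSemidef.sqrt with hBdef
  set S := h1.sqrt with hSdef
  set T := h2.sqrt with hTdef
  have hAA : A * A = W := hW.posSemidef.sqrt_mul_self
  have hBB : B * B = Q := hQ.posSemidef.sqrt_mul_self
  have hSS : S * S = A * Q * A := h1.sqrt_mul_self
  have hTT : T * T = B * W * B := h2.sqrt_mul_self
  -- invertibility (via determinants)
  have detW : W.det ≠ 0 := ne_of_gt hW.det_pos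
  have detQ : Q.det ≠ 0 := ne_of_gt hQ.det_pos
  have dA : IsUnit A.det := by
    refine isUnit_iff_ne_zero.mpr fun h => detW ?_
    rw [← hAA, det_mul, h, mul_zero]
  have dB : IsUnit B.det := by
    refine isUnit_iff_ne_zero.mpr fun h => detQ ?_
    rw [← hBB, det_mul, h, mul_zero]
  have dS : IsUnit S.det := by
    refine isUnit_iff_ne_zero.mpr fun h => ?_
    have : (S * S).det = 0 := by rw [det_mul, h, mul_zero]
    rw [hSS, det_mul, det_mul] at this
    exact (mul_ne_zero (mul_ne_zero dA.ne_zero detQ) dA.ne_zero) this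
  have hSinv : S⁻¹ * S = 1 := nonsing_inv_mul _ dS
  have hSinv' : S * S⁻¹ = 1 := mul_nonsing_inv _ dS
  have hBinv : B⁻¹ * B = 1 := nonsing_inv_mul _ dB
  have hBinv' : B * B⁻¹ = 1 := mul_nonsing_inv _ dB
  -- Hermitian facts
  have hAh : Aᴴ = A := hW.posSemidef.posSemidef_sqrt.isHermitian
  have hBih : (B⁻¹)ᴴ = B⁻¹ := (hQ.posSemidef.posSemidef_sqrt.inv).isHermitian
  set X := A * S⁻¹ * A with hXdef
  set Y := B⁻¹ * T * B⁻¹ with hYdef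
  have hX : X.PosSemidef := by
    have h := (h1.posSemidef_sqrt.inv).mul_mul_conjTranspose_same A
    rwa [hAh] at h
  have hY : Y.PosSemidef := by
    have h := h2.posSemidef_sqrt.mul_mul_conjTranspose_same B⁻¹
    rwa [hBih] at h
  have hXQX : X * Q * X = W := by
    calc X * Q * X = A * S⁻¹ * (A * Q * A) * S⁻¹ * A := by
          rw [hXdef]; noncomm_ring [mul_assoc]
      _ = A * (S⁻¹ * (S * S) * S⁻¹) * A := by rw [hSS]; noncomm_ring [mul_assoc]
      _ = W := by
          rw [← mul_assoc S⁻¹ S S, hSinv, one_mul, hSinv', mul_one, hAA]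
  have hYQY : Y * Q * Y = W := by
    calc Y * Q * Y = B⁻¹ * T * (B⁻¹ * (B * B) * B⁻¹) * T * B⁻¹ := by
          rw [hYdef, hBB]; noncomm_ring [mul_assoc]
      _ = B⁻¹ * (T * T) * B⁻¹ := by
          rw [← mul_assoc B⁻¹ B B, hBinv, one_mul, hBinv', mul_one]; noncomm_ring [mul_assoc]
      _ = W := by
          rw [hTT, show B⁻¹ * (B * W * B) * B⁻¹ = (B⁻¹ * B) * W * (B * B⁻¹) by noncomm_ring [mul_assoc],
            hBinv, hBinv', one_mul, mul_one]
  -- conjugate by B and use uniqueness of the positive semidefinite square root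
  have hXB : (B * X * B).PosSemidef := by
    have := hX.mul_mul_conjTranspose_same B
    rwa [hQ.posSemidef.posSemidef_sqrt.isHermitian] at this
  have hYB : (B * Y * B).PosSemidef := by
    have := hY.mul_mul_conjTranspose_same B
    rwa [hQ.posSemidef.posSemidef_sqrt.isHermitian] at this
  have hsq : (B * X * B) ^ 2 = (B * Y * B) ^ 2 := by
    have e1 : (B * X * B) ^ 2 = B * (X * Q * X) * B := by
      rw [sq, ← hBB]; noncomm_ring [mul_assoc]
    have e2 : (B * Y * B) ^ 2 = B * (Y * Q * Y) * B := by
      rw [sq, ← hBB]; noncomm_ring [mul_assoc]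
    rw [e1, e2, hXQX, hYQY]
  have hBXB : B * X * B = B * Y * B := hXB.eq_of_sq_eq_sq hYB hsq
  have : B⁻¹ * (B * X * B) * B⁻¹ = B⁻¹ * (B * Y * B) * B⁻¹ := by rw [hBXB]
  rwa [show B⁻¹ * (B * X * B) * B⁻¹ = (B⁻¹ * B) * X * (B * B⁻¹) by noncomm_ring [mul_assoc],
    show B⁻¹ * (B * Y * B) * B⁻¹ = (B⁻¹ * B) * Y * (B * B⁻¹) by noncomm_ring [mul_assoc],
    hBinv, hBinv', one_mul, mul_one, one_mul, mul_one] at this
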